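/- For any family {G_N} of weighted undirected graphs with uniformly bounded nodal degrees (at most q neighbors each) and edge weights bounded above by w_max, the smallest grounded-Laplacian eigenvalue tends to zero: λ̄₁(G_N) → 0 as N → ∞. -/

import Mathlib

open Matrix Filter

/-- Sorted (ascending) eigenvalues of a Hermitian matrix. -/
noncomputable def sortedEig {N : ℕ} {L : Matrix (Fin N) (Fin N) ℝ}
    (hL : L.IsHermitian) : Fin N → ℝ :=
  hL.eigenvalues ∘ Tuple.sort hL.eigenvalues

/-- Weighted graph Laplacian. -/
noncomputable def lap {N : ℕ} (w : Fin N → Fin N → ℝ) : Matrix (Fin N) (Fin N) ℝ :=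
  Matrix.of fun i j => if i = j then ∑ k, w i k else - w i j

lemma lap_entry {N : ℕ} (w : Fin N → Fin N → ℝ) (hdiag : ∀ i, w i i = 0) (i j : Fin N) :
    lap w i j = (if i = j then ∑ k, w i k else 0) - w i j := by
  unfold lap
  by_cases h : i = j <;> simp [h, hdiag]

lemma lap_quad_nonneg {N : ℕ} (w : Fin N → Fin N → ℝ)
    (hsym : ∀ i j, w i j = w j i) (hnn : ∀ i j, 0 ≤ w i j) (hdiag : ∀ i, w i i = 0)
    (x : Fin N → ℝ) : 0 ≤ x ⬝ᵥ lap w *ᵥ x := by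
  have h1 : x ⬝ᵥ lap w *ᵥ x
      = ∑ i, ∑ j, (w i j * x i ^ 2 - w i j * (x i * x j)) := by
    simp only [dotProduct, mulVec, dotProduct]
    refine Finset.sum_congr rfl fun i _ => ?_
    rw [Finset.mul_sum]
    have e : ∀ j, x i * (lap w i j * x j)
        = (if i = j then (∑ k, w i k) * x i ^ 2 else 0) - w i j * (x i * x j) := by
      intro j
      rw [lap_entry w hdiag]
      by_cases h : i = j
      · subst h; simp [hdiag i]; ring
      · simp [h]; ring
    simp_rw [e]
    rw [Finset.sum_sub_distrib, Finset.sum_ite_eq, Finset.sum_sub_distrib]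
    simp [Finset.sum_mul]
  have hswap : ∑ i, ∑ j, (w i j * x i ^ 2 - w i j * (x i * x j))
      = ∑ i, ∑ j, (w i j * x j ^ 2 - w i j * (x i * x j)) := by
    rw [Finset.sum_comm]
    refine Finset.sum_congr rfl fun i _ => Finset.sum_congr rfl fun j _ => ?_
    rw [hsym j i, mul_comm (x j) (x i)]
  have key : x ⬝ᵥ lap w *ᵥ x + x ⬝ᵥ lap w *ᵥ x = ∑ i, ∑ j, w i j * (x i - x j) ^ 2 := by
    nth_rewrite 2 [h1]
    rw [hswap, h1, ← Finset.sum_add_distrib]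
    refine Finset.sum_congr rfl fun i _ => ?_
    rw [← Finset.sum_add_distrib]
    exact Finset.sum_congr rfl fun j _ => by ring
  have hpos : 0 ≤ ∑ i, ∑ j, w i j * (x i - x j) ^ 2 :=
    Finset.sum_nonneg fun i _ => Finset.sum_nonneg fun j _ =>
      mul_nonneg (hnn i j) (sq_nonneg _)
  nlinarith [key]

lemma rayleigh_min {N : ℕ} {A : Matrix (Fin N) (Fin N) ℝ} (hA : A.IsHermitian) (c : ℝ)
    (hc : ∀ i, c ≤ hA.eigenvalues i) (x : Fin N → ℝ) :
    c * (x ⬝ᵥ x) ≤ x ⬝ᵥ A *ᵥ x := by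
  set U : Matrix (Fin N) (Fin N) ℝ := (hA.eigenvectorUnitary : Matrix (Fin N) (Fin N) ℝ) with hU
  have hstar : star U = Uᵀ := rfl
  set y : Fin N → ℝ := Uᵀ *ᵥ x with hy
  have hUU : U * star U = 1 := (Matrix.mem_unitaryGroup_iff).mp hA.eigenvectorUnitary.2
  have hdiagf : (RCLike.ofReal ∘ hA.eigenvalues : Fin N → ℝ) = hA.eigenvalues := rfl
  have hquad : x ⬝ᵥ A *ᵥ x = ∑ i, hA.eigenvalues i * y i ^ 2 := by
    conv_lhs => rw [hA.spectral_theorem, Unitary.conjStarAlgAut_apply, ← hU]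
    rw [hdiagf, hstar, ← Matrix.mulVec_mulVec, ← Matrix.mulVec_mulVec,
      Matrix.dotProduct_mulVec x U, ← Matrix.mulVec_transpose, ← hy]
    simp only [dotProduct, mulVec_diagonal]
    exact Finset.sum_congr rfl fun i _ => by ring
  have hnorm : x ⬝ᵥ x = ∑ i, y i ^ 2 := by
    have : x ⬝ᵥ x = y ⬝ᵥ y := by
      rw [hy, Matrix.dotProduct_mulVec, ← Matrix.mulVec_transpose, Matrix.transpose_transpose,
        Matrix.mulVec_mulVec, ← hstar, hUU, Matrix.one_mulVec, dotProduct_comm]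
    rw [this]
    exact Finset.sum_congr rfl fun i _ => by ring
  rw [hquad, hnorm, Finset.mul_sum]
  exact Finset.sum_le_sum fun i _ =>
    mul_le_mul_of_nonneg_right (hc i) (sq_nonneg _)

lemma sorted_min {N : ℕ} {A : Matrix (Fin N) (Fin N) ℝ} (hA : A.IsHermitian) (h : 0 < N)
    (i : Fin N) : sortedEig hA ⟨0, h⟩ ≤ hA.eigenvalues i := by
  have hmono := Tuple.monotone_sort hA.eigenvalues
  have heq : hA.eigenvalues i
      = (hA.eigenvalues ∘ Tuple.sort hA.eigenvalues) ((Tuple.sort hA.eigenvalues)⁻¹ i) := by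
    simp
  rw [heq]
  exact hmono (Fin.le_def.mpr (Nat.zero_le _))

lemma grounded_quad {N : ℕ} (L : Matrix (Fin (N + 1)) (Fin (N + 1)) ℝ) (y : Fin N → ℝ) :
    y ⬝ᵥ (L.submatrix Fin.succ Fin.succ) *ᵥ y = (Fin.cons 0 y) ⬝ᵥ L *ᵥ (Fin.cons 0 y) := by
  simp [dotProduct, mulVec, Fin.sum_univ_succ]

/-- For any family of weighted undirected graphs (on m n + 1 vertices, with
vertex 0 grounded) with uniformly bounded degrees (at most q) and edge weights
at most w_max, the smallest grounded-Laplacian eigenvalue tends to zero as the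
network size tends to infinity. -/
theorem stmt6 (q : ℕ) (wmax : ℝ)
    (m : ℕ → ℕ) (hm : ∀ n, 1 ≤ m n)
    (hmTop : Tendsto m atTop atTop)
    (w : ∀ n, Fin (m n + 1) → Fin (m n + 1) → ℝ)
    (hsym : ∀ n i j, w n i j = w n j i) (hnn : ∀ n i j, 0 ≤ w n i j)
    (hdiag : ∀ n i, w n i i = 0)
    (hwmax : ∀ n i j, w n i j ≤ wmax)
    (hdeg : ∀ n i, (Finset.univ.filter fun j => w n i j ≠ 0).card ≤ q)
    (hH : ∀ n, ((lap (w n)).submatrix Fin.succ Fin.succ).IsHermitian) :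
    Tendsto (fun n => sortedEig (hH n) ⟨0, hm n⟩) atTop (nhds 0) := by
  have hwnn : 0 ≤ wmax := (hdiag 0 0) ▸ (hwmax 0 0 0)
  have hlow : ∀ n, 0 ≤ sortedEig (hH n) ⟨0, hm n⟩ := by
    intro n
    have hpsd : ((lap (w n)).submatrix Fin.succ Fin.succ).PosSemidef := by
      refine Matrix.PosSemidef.of_dotProduct_mulVec_nonneg (hH n) fun y => ?_
      have hst : star y = y := rfl
      rw [hst, grounded_quad]
      exact lap_quad_nonneg _ (hsym n) (hnn n) (hdiag n) _
    exact hpsd.eigenvalues_nonneg (Tuple.sort (hH n).eigenvalues ⟨0, hm n⟩)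
  have hup : ∀ n, sortedEig (hH n) ⟨0, hm n⟩ ≤ (q * wmax) / (m n) := by
    intro n
    have hMpos : (0:ℝ) < (m n : ℝ) := by exact_mod_cast hm n
    set ones : Fin (m n) → ℝ := fun _ => 1 with hones_def
    have hray := rayleigh_min (hH n) (sortedEig (hH n) ⟨0, hm n⟩)
      (sorted_min (hH n) (hm n)) ones
    have hones : ones ⬝ᵥ ones = (m n : ℝ) := by
      simp [dotProduct, ones]
    have hform : ones ⬝ᵥ ((lap (w n)).submatrix Fin.succ Fin.succ) *ᵥ ones
        = ∑ i : Fin (m n), ∑ j : Fin (m n), lap (w n) i.succ j.succ := by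
      simp [dotProduct, mulVec, ones]
    have hrow : ∀ i : Fin (m n), ∑ j : Fin (m n), lap (w n) i.succ j.succ = w n i.succ 0 := by
      intro i
      have hfull : ∑ j' : Fin (m n + 1), lap (w n) i.succ j' = 0 := by
        simp_rw [lap_entry (w n) (hdiag n)]
        rw [Finset.sum_sub_distrib, Finset.sum_ite_eq]
        simp
      rw [Fin.sum_univ_succ] at hfull
      have h0 : lap (w n) i.succ 0 = - w n i.succ 0 := by
        unfold lap; simp [Fin.succ_ne_zero i]
      rw [h0] at hfull
      linarith
    have hsum : ∑ i : Fin (m n), w n i.succ 0 ≤ q * wmax := by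
      have h0 : ∑ i : Fin (m n), w n i.succ 0 = ∑ i' : Fin (m n + 1), w n 0 i' := by
        symm
        rw [Fin.sum_univ_succ, hdiag n 0, zero_add]
        exact Finset.sum_congr rfl fun i _ => (hsym n 0 i.succ)
      rw [h0]
      have hsub : ∑ i' : Fin (m n + 1), w n 0 i'
          = ∑ i' ∈ Finset.univ.filter (fun j => w n 0 j ≠ 0), w n 0 i' := by
        symm
        apply Finset.sum_filter_of_ne
        intro x _ hx
        exact fun h => hx (by rw [h])
      rw [hsub]
      calc ∑ i' ∈ Finset.univ.filter (fun j => w n 0 j ≠ 0), w n 0 i'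
          ≤ (Finset.univ.filter (fun j => w n 0 j ≠ 0)).card • wmax :=
            Finset.sum_le_card_nsmul _ _ wmax (fun x _ => hwmax n 0 x)
        _ = ((Finset.univ.filter (fun j => w n 0 j ≠ 0)).card : ℝ) * wmax := by
            rw [nsmul_eq_mul]
        _ ≤ (q : ℝ) * wmax := by
            apply mul_le_mul_of_nonneg_right _ hwnn
            exact_mod_cast hdeg n 0
    rw [le_div_iff₀ hMpos]
    calc sortedEig (hH n) ⟨0, hm n⟩ * (m n : ℝ)
        = sortedEig (hH n) ⟨0, hm n⟩ * (ones ⬝ᵥ ones) := by rw [hones]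
      _ ≤ ones ⬝ᵥ ((lap (w n)).submatrix Fin.succ Fin.succ) *ᵥ ones := hray
      _ = ∑ i : Fin (m n), ∑ j : Fin (m n), lap (w n) i.succ j.succ := hform
      _ = ∑ i : Fin (m n), w n i.succ 0 := Finset.sum_congr rfl fun i _ => hrow i
      _ ≤ q * wmax := hsum
  refine tendsto_of_tendsto_of_tendsto_of_le_of_le tendsto_const_nhds ?_ hlow hup
  exact Tendsto.div_atTop tendsto_const_nhds (tendsto_natCast_atTop_atTop.comp hmTop)
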